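/- Let a, b > 0 and let g : (0,a] × [0,b] → [0,∞) satisfy g(t,x) ≤ p(t) ψ(t,x), where p : (0,a] → (0,∞) is locally integrable on (0,a] and ψ : (0,a] × [0,2b] → [0,∞) is continuous. Assume: (i) ψ(t,0) = 0 for all t ∈ (0,a] and ψ(t,x) > 0 for all (t,x) ∈ (0,a] × (0,b]; (ii') ψ is nondecreasing with respect to its first variable; (iii') for every Lipschitz continuous function u : (t₁,t₂] ⊂ (0,a] → (0,b) with lim_{t→t₁⁺} u(t)/(t−t₁) = 0, one has limsup_{t→t₁⁺} ( ∫_{u(t)}^{u(t₂)} dr/ψ(t₂,r) − ∫_t^{t₂} p(s) ds ) > 0. Then g is a uniqueness bound. -/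

import Mathlib

open MeasureTheory Set Filter intervalIntegral

section Aux

lemma auxLipschitzClamp (lo hi : ℝ) : LipschitzWith 1 (fun x : ℝ => max lo (min x hi)) := by
  have h1 : LipschitzWith 1 (fun x : ℝ => min x hi) := by
    have := LipschitzWith.id.min (LipschitzWith.const (α := ℝ) hi)
    simpa using this
  have := (LipschitzWith.const (α := ℝ) lo).max h1
  simpa using this

lemma auxClampMem {lo hi : ℝ} (hlohi : lo ≤ hi) (x : ℝ) : max lo (min x hi) ∈ Set.Icc lo hi :=
  ⟨le_max_left _ _, max_le hlohi (min_le_right _ _)⟩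

lemma auxClampEq {lo hi x : ℝ} (hx : x ∈ Set.Icc lo hi) : max lo (min x hi) = x := by
  rw [min_eq_left hx.2, max_eq_right hx.1]

lemma auxAbsDerivLe {K : NNReal} {h : ℝ → ℝ} (hh : LipschitzWith K h)
    {x y : ℝ} (hx : HasDerivAt h y x) : |y| ≤ K := by
  have hs := hasDerivAt_iff_tendsto_slope.1 hx
  have habs : Tendsto (fun z => |slope h x z|) (nhdsWithin x {x}ᶜ) (nhds |y|) :=
    (continuous_abs.tendsto y).comp hs
  refine le_of_tendsto habs (Eventually.of_forall fun z => ?_)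
  rcases eq_or_ne z x with rfl | hzx
  · simpa [slope_same] using K.coe_nonneg
  · rw [slope_def_field, abs_div]
    rw [div_le_iff₀ (by simpa [sub_eq_zero] using abs_pos.2 (sub_ne_zero.2 hzx))]
    have := hh.dist_le_mul z x
    simpa [Real.dist_eq, abs_sub_comm] using this

/-- FTC-type inequality: a Lipschitz function whose derivative (where it exists)
is a.e. bounded by an integrable function `p` on `(s,t)` satisfies
`h t - h s ≤ ∫ p`. -/
lemma auxLipschitzSubLeIntegral {K : NNReal} {h : ℝ → ℝ} (hh : LipschitzWith K h)
    {s t : ℝ} (hst : s < t) {p : ℝ → ℝ} (hp : IntegrableOn p (Set.Icc s t))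
    (hd : ∀ᵐ σ ∂volume, σ ∈ Set.Ioo s t → ∀ y, HasDerivAt h y σ → y ≤ p σ) :
    h t - h s ≤ ∫ σ in s..t, p σ := by
  have hc : Continuous h := hh.continuous
  set δ : ℕ → ℝ := fun n => 1 / (n + 1) with hδdef
  have hδpos : ∀ n, 0 < δ n := fun n => by positivity
  have hδ0 : Tendsto δ atTop (nhds 0) := tendsto_one_div_add_atTop_nhds_zero_nat
  set H : ℝ → ℝ := fun x => ∫ u in s..x, h u with hHdef
  have hH : ∀ x : ℝ, HasDerivAt H (h x) x := by
    intro x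
    exact intervalIntegral.integral_hasDerivAt_right (hc.intervalIntegrable s x)
      (hc.stronglyMeasurable.stronglyMeasurableAtFilter) hc.continuousAt
  have slopelim : ∀ x : ℝ, Tendsto (fun n => (H (x + δ n) - H x) / δ n) atTop (nhds (h x)) := by
    intro x
    have h1 := hasDerivAt_iff_tendsto_slope.1 (hH x)
    have h2 : Tendsto (fun n => x + δ n) atTop (nhdsWithin x {x}ᶜ) := by
      rw [tendsto_nhdsWithin_iff]
      constructor
      · simpa using (tendsto_const_nhds.add hδ0)
      · exact Eventually.of_forall fun n => by
          simp only [mem_compl_iff, mem_singleton_iff]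
          intro hcon; nlinarith [hδpos n]
    have := h1.comp h2
    refine this.congr fun n => ?_
    rw [Function.comp_apply, slope_def_field]; ring_nf
  set q : ℕ → ℝ → ℝ := fun n σ => (h (σ + δ n) - h σ) / δ n with hqdef
  have hqint : ∀ n, (∫ σ in s..t, q n σ)
      = (H (t + δ n) - H t) / δ n - (H (s + δ n) - H s) / δ n := by
    intro n
    have hint1 : IntervalIntegrable (fun σ => h (σ + δ n)) volume s t :=
      (hc.comp (continuous_id.add continuous_const)).intervalIntegrable s t
    have e1 : (∫ σ in s..t, q n σ)
        = ((∫ σ in s..t, h (σ + δ n)) - ∫ σ in s..t, h σ) / δ n := by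
      simp only [hqdef]
      rw [intervalIntegral.integral_div]
      rw [intervalIntegral.integral_sub hint1 (hc.intervalIntegrable s t)]
    have e2 : (∫ σ in s..t, h (σ + δ n)) = ∫ σ in (s + δ n)..(t + δ n), h σ :=
      intervalIntegral.integral_comp_add_right h (δ n)
    have e3 : (∫ σ in (s + δ n)..(t + δ n), h σ) = H (t + δ n) - H (s + δ n) :=
      (intervalIntegral.integral_interval_sub_left (hc.intervalIntegrable s (t + δ n))
        (hc.intervalIntegrable s (s + δ n))).symm
    have e4 : H s = 0 := intervalIntegral.integral_same
    rw [e1, e2, e3]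
    field_simp
    ring_nf
    rw [e4]
    ring
  have hA : Tendsto (fun n => ∫ σ in s..t, q n σ) atTop (nhds (h t - h s)) := by
    simp only [hqint]
    exact (slopelim t).sub (slopelim s)
  set D : ℝ → ℝ := deriv h with hDdef
  have hDmeas : Measurable D := measurable_deriv h
  have hdiff : ∀ᵐ x ∂(volume : Measure ℝ), DifferentiableAt ℝ h x := hh.ae_differentiableAt
  have hDlim : ∀ᵐ x ∂(volume : Measure ℝ), Tendsto (fun n => q n x) atTop (nhds (D x)) := by
    filter_upwards [hdiff] with x hx
    have h1 := hasDerivAt_iff_tendsto_slope.1 hx.hasDerivAt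
    have h2 : Tendsto (fun n => x + δ n) atTop (nhdsWithin x {x}ᶜ) := by
      rw [tendsto_nhdsWithin_iff]
      refine ⟨by simpa using (tendsto_const_nhds.add hδ0), Eventually.of_forall fun n => ?_⟩
      simp only [mem_compl_iff, mem_singleton_iff]
      intro hcon; nlinarith [hδpos n]
    refine (h1.comp h2).congr fun n => ?_
    rw [Function.comp_apply, slope_def_field]; ring_nf; simp only [hqdef]; ring
  have hB : Tendsto (fun n => ∫ σ in s..t, q n σ) atTop (nhds (∫ σ in s..t, D σ)) := by
    refine intervalIntegral.tendsto_integral_filter_of_dominated_convergence (fun _ => (K : ℝ))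
      (Eventually.of_forall fun n => ?_) (Eventually.of_forall fun n => ?_) ?_ ?_
    · exact ((hc.comp (continuous_id.add continuous_const)).sub hc).div_const (δ n)
        |>.aestronglyMeasurable.restrict
    · refine ae_of_all _ fun x _ => ?_
      have := hh.dist_le_mul (x + δ n) x
      rw [Real.dist_eq, Real.dist_eq] at this
      have hδ := hδpos n
      rw [Real.norm_eq_abs, abs_div, abs_of_pos hδ, div_le_iff₀ hδ]
      calc |h (x + δ n) - h x| ≤ K * |x + δ n - x| := this
        _ = K * δ n := by rw [show x + δ n - x = δ n by ring, abs_of_pos hδ]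
    · exact intervalIntegrable_const
    · exact hDlim.mono fun x hx _ => hx
  have hEq : h t - h s = ∫ σ in s..t, D σ := tendsto_nhds_unique hA hB
  rw [hEq]
  have hDbd : ∀ᵐ x ∂(volume : Measure ℝ), |D x| ≤ K := by
    filter_upwards [hdiff] with x hx
    exact auxAbsDerivLe hh hx.hasDerivAt
  have hDint : IntervalIntegrable D volume s t := by
    rw [intervalIntegrable_iff_integrableOn_Icc_of_le hst.le]
    refine Integrable.mono' (g := fun _ => (K : ℝ))
      (integrableOn_const measure_Icc_lt_top.ne)
      (hDmeas.aestronglyMeasurable.restrict) ?_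
    exact ae_restrict_of_ae (hDbd.mono fun x hx => by simpa using hx)
  have hpint : IntervalIntegrable p volume s t := by
    rw [intervalIntegrable_iff_integrableOn_Icc_of_le hst.le]; exact hp
  refine intervalIntegral.integral_mono_ae_restrict hst.le hDint hpint ?_
  have hIoo : volume.restrict (Icc s t) = volume.restrict (Ioo s t) :=
    (Measure.restrict_congr_set Ioo_ae_eq_Icc).symm
  rw [hIoo]
  have hmem : ∀ᵐ x ∂volume.restrict (Ioo s t), x ∈ Ioo s t := ae_restrict_mem measurableSet_Ioo
  filter_upwards [hmem, ae_restrict_of_ae hd, ae_restrict_of_ae hdiff] with x hx1 hx2 hx3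
  exact hx2 hx1 (D x) hx3.hasDerivAt

/-- If the integrals of a nonneg continuous function over `(c/(n+1), c]` are uniformly
bounded, the function is integrable on `(0,c]`. -/
lemma auxIntegrableOfBounded {f : ℝ → ℝ} {c M : ℝ} (hc : 0 < c)
    (hcont : ContinuousOn f (Set.Ioc 0 c)) (hf0 : ∀ r ∈ Set.Ioc (0:ℝ) c, 0 ≤ f r)
    (hbd : ∀ n : ℕ, (∫ r in Set.Ioc (c / (n+1)) c, f r) ≤ M) :
    IntegrableOn f (Set.Ioc 0 c) volume := by
  refine integrableOn_Ioc_of_intervalIntegral_norm_bounded_left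
    (f := f) (a := fun n : ℕ => c / (n+1)) (l := atTop) (I := M) (fun n => ?_) ?_ ?_
  · have hsub : Set.Icc (c / (n+1)) c ⊆ Set.Ioc 0 c := fun x hx =>
      ⟨lt_of_lt_of_le (by positivity) hx.1, hx.2⟩
    exact ((hcont.mono hsub).integrableOn_compact isCompact_Icc).mono_set Ioc_subset_Icc_self
  · have h1 : Tendsto (fun n : ℕ => c * (1 / (n + 1))) atTop (nhds (c * 0)) :=
      tendsto_one_div_add_atTop_nhds_zero_nat.const_mul c
    simpa [div_eq_mul_inv] using h1
  · refine Eventually.of_forall fun n => ?_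
    have hsub : Set.Ioc (c / (n+1)) c ⊆ Set.Ioc 0 c := fun x hx =>
      ⟨lt_of_le_of_lt (by positivity) hx.1, hx.2⟩
    have : (∫ r in Set.Ioc (c / (n+1)) c, ‖f r‖) = ∫ r in Set.Ioc (c / (n+1)) c, f r := by
      refine setIntegral_congr_fun measurableSet_Ioc fun x hx => ?_
      exact Real.norm_of_nonneg (hf0 x (hsub hx))
    rw [this]
    exact hbd n

end Aux

/-- A function `g : (0,a] × [0,b] → [0,∞)` is a *uniqueness bound* (Definition 1)
if for every `a' ∈ (0,a]` the only Lipschitz continuous function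
`φ : [0,a'] → [0,∞)` (taking values in the domain `[0,b]` of `g`) satisfying
`φ'(t) ≤ g(t,φ(t))` for almost all `t ∈ (0,a']`, `φ(0) = 0` and `φ'(0) = 0`,
is `φ ≡ 0` on `[0,a']`. -/
def IsUniquenessBound (a b : ℝ) (g : ℝ → ℝ → ℝ) : Prop :=
  ∀ a' ∈ Set.Ioc (0:ℝ) a, ∀ φ : ℝ → ℝ,
    (∃ K, LipschitzOnWith K φ (Set.Icc 0 a')) →
    (∀ t ∈ Set.Icc (0:ℝ) a', φ t ∈ Set.Icc (0:ℝ) b) →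
    φ 0 = 0 →
    HasDerivWithinAt φ 0 (Set.Ici 0) 0 →
    (∀ᵐ t ∂volume, t ∈ Set.Ioc (0:ℝ) a' → ∀ y, HasDerivAt φ y t → y ≤ g t (φ t)) →
    ∀ t ∈ Set.Icc (0:ℝ) a', φ t = 0

set_option maxHeartbeats 1600000 in
/-- Theorem 4, with conditions (i), (ii') and (iii'): if `g(t,x) ≤ p(t)ψ(t,x)`
with `p : (0,a] → (0,∞)` locally integrable, `ψ : (0,a] × [0,2b] → [0,∞)`
continuous, `ψ(t,0) = 0`, `ψ(t,x) > 0` for `x ∈ (0,b]`, `ψ` nondecreasing in its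
first variable, and the limsup condition (iii') holding for every Lipschitz
`u : (t₁,t₂] → (0,b)` with `u(t)/(t-t₁) → 0` as `t → t₁⁺`, then `g` is a
uniqueness bound. -/
theorem isUniquenessBound_of_limsup_pos_monotone
    (a b : ℝ) (ha : 0 < a) (hb : 0 < b)
    (g : ℝ → ℝ → ℝ) (p : ℝ → ℝ) (ψ : ℝ → ℝ → ℝ)
    (hg0 : ∀ t ∈ Set.Ioc (0:ℝ) a, ∀ x ∈ Set.Icc (0:ℝ) b, 0 ≤ g t x)
    (hgle : ∀ t ∈ Set.Ioc (0:ℝ) a, ∀ x ∈ Set.Icc (0:ℝ) b, g t x ≤ p t * ψ t x)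
    (hp : ∀ t ∈ Set.Ioc (0:ℝ) a, 0 < p t)
    (hploc : ∀ c d : ℝ, 0 < c → c ≤ d → d ≤ a → IntegrableOn p (Set.Icc c d))
    (hψc : ContinuousOn (fun q : ℝ × ℝ => ψ q.1 q.2) (Set.Ioc 0 a ×ˢ Set.Icc 0 (2 * b)))
    (hψ0 : ∀ t ∈ Set.Ioc (0:ℝ) a, ∀ x ∈ Set.Icc (0:ℝ) (2 * b), 0 ≤ ψ t x)
    -- (i)
    (hi₁ : ∀ t ∈ Set.Ioc (0:ℝ) a, ψ t 0 = 0)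
    (hi₂ : ∀ t ∈ Set.Ioc (0:ℝ) a, ∀ x ∈ Set.Ioc (0:ℝ) b, 0 < ψ t x)
    -- (ii'): `ψ` is nondecreasing with respect to its first variable
    (hii' : ∀ x ∈ Set.Icc (0:ℝ) (2 * b), ∀ s ∈ Set.Ioc (0:ℝ) a, ∀ t ∈ Set.Ioc (0:ℝ) a,
      s ≤ t → ψ s x ≤ ψ t x)
    -- (iii')
    (hiii' : ∀ t₁ t₂ : ℝ, 0 ≤ t₁ → t₁ < t₂ → t₂ ≤ a → ∀ u : ℝ → ℝ,
      (∃ K, LipschitzOnWith K u (Set.Ioc t₁ t₂)) →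
      (∀ t ∈ Set.Ioc t₁ t₂, u t ∈ Set.Ioo (0:ℝ) b) →
      Tendsto (fun t => u t / (t - t₁)) (nhdsWithin t₁ (Set.Ioi t₁)) (nhds 0) →
      (0 : EReal) < Filter.limsup
        (fun t => (((∫ r in u t..u t₂, 1 / ψ t₂ r) - (∫ s in t..t₂, p s) : ℝ) : EReal))
        (nhdsWithin t₁ (Set.Ioi t₁))) :
    IsUniquenessBound a b g := by
  intro a' ha' φ hlip hrange hφzero hφ'0 hineq
  obtain ⟨K, hK⟩ := hlip
  by_contra hcon
  push_neg at hcon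
  obtain ⟨ts, hts, hφts⟩ := hcon
  have ha'0 : 0 < a' := ha'.1
  have ha'a : a' ≤ a := ha'.2
  -- the clamped version of φ
  set c : ℝ → ℝ := fun σ => max 0 (min σ a') with hcdef
  have hclip : LipschitzWith 1 c := auxLipschitzClamp 0 a'
  have hcmem : ∀ σ, c σ ∈ Icc 0 a' := auxClampMem ha'0.le
  have hceq : ∀ σ ∈ Icc 0 a', c σ = σ := fun σ hσ => auxClampEq hσ
  set Φ : ℝ → ℝ := φ ∘ c with hΦdef
  have hΦlip : LipschitzWith (K * 1) Φ := by
    rw [← lipschitzOnWith_univ]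
    exact hK.comp (hclip.lipschitzOnWith (s := univ)) (fun σ _ => hcmem σ)
  have hΦeq : ∀ σ ∈ Icc 0 a', Φ σ = φ σ := fun σ hσ => by
    simp only [hΦdef, Function.comp_apply, hceq σ hσ]
  have hΦcont : Continuous Φ := hΦlip.continuous
  have hΦrange : ∀ σ, Φ σ ∈ Icc 0 b := fun σ => hrange _ (hcmem σ)
  have hΦzero : Φ 0 = 0 := by rw [hΦeq 0 ⟨le_rfl, ha'0.le⟩]; exact hφzero
  have hΦts : 0 < Φ ts := by
    rw [hΦeq ts hts]
    exact (hrange ts hts).1.lt_of_ne' hφts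
  have hΦslope : Tendsto (fun τ => Φ τ / τ) (nhdsWithin 0 (Ioi 0)) (nhds 0) := by
    have h1 := hasDerivWithinAt_iff_tendsto_slope.1 hφ'0
    rw [Ici_sdiff_left] at h1
    have h2 : ∀ᶠ τ in nhdsWithin (0:ℝ) (Ioi 0), slope φ 0 τ = Φ τ / τ := by
      filter_upwards [Ioc_mem_nhdsGT ha'0] with τ hτ
      rw [slope_def_field, hΦeq τ ⟨hτ.1.le, hτ.2⟩]
      simp [hφzero]
    exact (h1.congr' h2)
  have hΦder : ∀ᵐ σ ∂(volume : Measure ℝ),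
      σ ∈ Ioo 0 a' → ∀ y, HasDerivAt Φ y σ → y ≤ g σ (Φ σ) := by
    filter_upwards [hineq] with σ hσ hσmem y hy
    have hnb : Icc 0 a' ∈ nhds σ := Icc_mem_nhds hσmem.1 hσmem.2
    have heq : Φ =ᶠ[nhds σ] φ := eventually_of_mem hnb (fun τ hτ => hΦeq τ hτ)
    have hy' : HasDerivAt φ y σ := hy.congr_of_eventuallyEq heq.symm
    have := hσ ⟨hσmem.1, hσmem.2.le⟩ y hy'
    rwa [← hΦeq σ ⟨hσmem.1.le, hσmem.2.le⟩] at this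
  have hΦdiff : ∀ᵐ σ ∂(volume : Measure ℝ), DifferentiableAt ℝ Φ σ := hΦlip.ae_differentiableAt
  -- choice of t₂
  have hts0 : 0 < ts := by
    rcases hts.1.lt_or_eq with h | h
    · exact h
    · exfalso; rw [← h] at hΦts; rw [← hΦeq 0 ⟨le_rfl, ha'0.le⟩] at hφzero
      rw [hφzero] at hΦts; exact lt_irrefl 0 hΦts
  obtain ⟨t₂, ht₂0, ht₂a', hΦt₂pos, hΦt₂b, hΦle⟩ :
      ∃ t₂, 0 < t₂ ∧ t₂ ≤ a' ∧ 0 < Φ t₂ ∧ Φ t₂ ≤ b / 2 ∧ ∀ τ ∈ Icc 0 t₂, Φ τ ≤ b / 2 := by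
    set m := min (Φ ts) (b / 2) with hmdef
    have hm0 : 0 < m := lt_min hΦts (half_pos hb)
    have hmb2 : m ≤ b / 2 := min_le_right _ _
    set S := Icc 0 ts ∩ Φ ⁻¹' (Ici m) with hSdef
    have hSne : S.Nonempty := ⟨ts, ⟨⟨hts0.le, le_rfl⟩, (show Φ ts ∈ Ici m by rw [mem_Ici, hmdef]; exact min_le_left _ _)⟩⟩
    have hSclosed : IsClosed S := isClosed_Icc.inter (isClosed_Ici.preimage hΦcont)
    have hSbdd : BddBelow S := ⟨0, fun x hx => hx.1.1⟩
    set t₂ := sInf S with ht₂def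
    have ht₂S : t₂ ∈ S := hSclosed.csInf_mem hSne hSbdd
    have ht₂m : m ≤ Φ t₂ := ht₂S.2
    have ht₂ts : t₂ ≤ ts := ht₂S.1.2
    have ht₂0 : 0 < t₂ := by
      rcases ht₂S.1.1.lt_or_eq with h | h
      · exact h
      · exfalso; rw [← h, hΦzero] at ht₂m; linarith
    have hlt : ∀ τ, 0 ≤ τ → τ < t₂ → Φ τ < m := by
      intro τ h0 hτ
      by_contra hge
      push_neg at hge
      exact absurd (csInf_le hSbdd ⟨⟨h0, hτ.le.trans ht₂ts⟩, hge⟩) (not_le.2 hτ)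
    have hΦt₂le : Φ t₂ ≤ m := by
      have h1 : Tendsto Φ (nhdsWithin t₂ (Iio t₂)) (nhds (Φ t₂)) :=
        (hΦcont.continuousAt.tendsto).mono_left nhdsWithin_le_nhds
      refine le_of_tendsto h1 ?_
      filter_upwards [Ioo_mem_nhdsLT_of_mem (show t₂ ∈ Ioc 0 t₂ from ⟨ht₂0, le_rfl⟩)]
        with τ hτ
      exact (hlt τ hτ.1.le hτ.2).le
    refine ⟨t₂, ht₂0, ht₂ts.trans hts.2, lt_of_lt_of_le hm0 ht₂m, hΦt₂le.trans hmb2, ?_⟩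
    intro τ hτ
    rcases hτ.2.lt_or_eq with h | h
    · exact (hlt τ hτ.1 h).le.trans hmb2
    · rw [h]; exact hΦt₂le.trans hmb2
  have ht₂a : t₂ ≤ a := ht₂a'.trans ha'a
  have ht₂Ioca : t₂ ∈ Ioc (0:ℝ) a := ⟨ht₂0, ht₂a⟩
  -- choice of t₁
  obtain ⟨t₁, ht₁0, ht₁t₂, hΦt₁, hpos⟩ :
      ∃ t₁, 0 ≤ t₁ ∧ t₁ < t₂ ∧ Φ t₁ = 0 ∧ ∀ τ ∈ Ioc t₁ t₂, 0 < Φ τ := by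
    set Z := Icc 0 t₂ ∩ Φ ⁻¹' {0} with hZdef
    have hZne : Z.Nonempty := ⟨0, ⟨⟨le_rfl, ht₂0.le⟩, hΦzero⟩⟩
    have hZclosed : IsClosed Z := isClosed_Icc.inter (isClosed_singleton.preimage hΦcont)
    have hZbdd : BddAbove Z := ⟨t₂, fun x hx => hx.1.2⟩
    set t₁ := sSup Z with ht₁def
    have ht₁Z : t₁ ∈ Z := hZclosed.csSup_mem hZne hZbdd
    have hΦt₁ : Φ t₁ = 0 := ht₁Z.2
    have ht₁t₂ : t₁ < t₂ := by
      rcases ht₁Z.1.2.lt_or_eq with h | h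
      · exact h
      · exfalso; rw [h] at hΦt₁; rw [hΦt₁] at hΦt₂pos; exact lt_irrefl 0 hΦt₂pos
    refine ⟨t₁, ht₁Z.1.1, ht₁t₂, hΦt₁, ?_⟩
    intro τ hτ
    rcases ((hΦrange τ).1).lt_or_eq with h | h
    · exact h
    · exfalso
      have hτZ : τ ∈ Z := ⟨⟨(ht₁Z.1.1.trans hτ.1.le), hτ.2⟩, h.symm⟩
      exact absurd (le_csSup hZbdd hτZ) (not_le.2 hτ.1)
  -- continuity of the slice ψ t₂
  have hb2b : b ≤ 2 * b := by linarith
  have hψslice : ContinuousOn (fun r => ψ t₂ r) (Icc 0 (2 * b)) := by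
    have h1 : ContinuousOn (fun r : ℝ => ((t₂ : ℝ), r)) (Icc 0 (2 * b)) :=
      (continuous_const.prodMk continuous_id).continuousOn
    exact hψc.comp h1 (fun r hr => ⟨ht₂Ioca, hr⟩)
  have hψpos : ∀ r ∈ Ioc (0:ℝ) b, 0 < ψ t₂ r := hi₂ t₂ ht₂Ioca
  have hinvcontIoc : ContinuousOn (fun r => (ψ t₂ r)⁻¹) (Ioc 0 b) :=
    ContinuousOn.inv₀ (hψslice.mono (fun r hr => ⟨hr.1.le, hr.2.trans hb2b⟩))
      (fun r hr => (hψpos r hr).ne')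
  have hIIinv : ∀ {x y : ℝ}, 0 < x → x ≤ y → y ≤ b →
      IntervalIntegrable (fun r => (ψ t₂ r)⁻¹) volume x y := by
    intro x y hx hxy hyb
    refine (hinvcontIoc.mono ?_).intervalIntegrable
    rw [uIcc_of_le hxy]
    exact fun r hr => ⟨lt_of_lt_of_le hx hr.1, hr.2.trans hyb⟩
  -- Step C: the key integral inequality
  have hC : ∀ τ ∈ Ioo t₁ t₂,
      (∫ r in (Φ τ)..(Φ t₂), (ψ t₂ r)⁻¹) ≤ ∫ σ in τ..t₂, p σ := by
    intro τ hτ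
    have hτ0 : 0 < τ := lt_of_le_of_lt ht₁0 hτ.1
    obtain ⟨σ₀, hσ₀mem, hσ₀min⟩ :=
      isCompact_Icc.exists_isMinOn (nonempty_Icc.2 hτ.2.le) hΦcont.continuousOn
    set m₀ := Φ σ₀ with hm₀def
    have hm₀pos : 0 < m₀ := hpos σ₀ ⟨lt_of_lt_of_le hτ.1 hσ₀mem.1, hσ₀mem.2⟩
    have hm₀b2 : m₀ ≤ b / 2 := hΦle σ₀ ⟨hτ0.le.trans hσ₀mem.1, hσ₀mem.2⟩
    have hrangeτ : ∀ σ ∈ Icc τ t₂, Φ σ ∈ Icc m₀ (b / 2) := fun σ hσ =>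
      ⟨isMinOn_iff.1 hσ₀min σ hσ, hΦle σ ⟨hτ0.le.trans hσ.1, hσ.2⟩⟩
    -- lower bound for ψ t₂ on [m₀/2, b]
    have hm₀2b : m₀ / 2 ≤ b := by linarith
    obtain ⟨r₀, hr₀J, hr₀min⟩ := isCompact_Icc.exists_isMinOn (nonempty_Icc.2 hm₀2b)
      (hψslice.mono (fun r hr => ⟨le_trans (by linarith) hr.1, hr.2.trans hb2b⟩))
    set δ := ψ t₂ r₀ with hδdef
    have hδpos : 0 < δ := hψpos r₀ ⟨lt_of_lt_of_le (by linarith) hr₀J.1, hr₀J.2⟩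
    have hδle : ∀ r ∈ Icc (m₀ / 2) b, δ ≤ ψ t₂ r := isMinOn_iff.1 hr₀min
    have hsub1 : Icc m₀ (b / 2) ⊆ Icc (m₀ / 2) b := fun r hr =>
      ⟨le_trans (by linarith) hr.1, hr.2.trans (by linarith)⟩
    have hinvcont : ContinuousOn (fun r => (ψ t₂ r)⁻¹) (Icc (m₀ / 2) b) :=
      hinvcontIoc.mono (fun r hr => ⟨lt_of_lt_of_le (by linarith) hr.1, hr.2⟩)
    set F : ℝ → ℝ := fun x => ∫ r in (Φ t₂)..x, (ψ t₂ r)⁻¹ with hFdef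
    have hΦt₂mem : Φ t₂ ∈ Icc m₀ (b / 2) := hrangeτ t₂ ⟨hτ.2.le, le_rfl⟩
    have hFint : ∀ x ∈ Icc m₀ (b / 2), ∀ y ∈ Icc m₀ (b / 2),
        IntervalIntegrable (fun r => (ψ t₂ r)⁻¹) volume x y := by
      intro x hx y hy
      exact (hinvcont.mono ((uIcc_subset_Icc hx hy).trans hsub1)).intervalIntegrable
    have hF' : ∀ x ∈ Icc m₀ (b / 2), HasDerivAt F ((ψ t₂ x)⁻¹) x := by
      intro x hx
      have hxIoo : x ∈ Ioo (m₀ / 2) b := ⟨lt_of_lt_of_le (by linarith [hx.1]) le_rfl |>.trans_le hx.1,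
        lt_of_le_of_lt hx.2 (by linarith)⟩
      refine intervalIntegral.integral_hasDerivAt_right (hFint _ hΦt₂mem _ hx) ?_ ?_
      · exact ⟨Ioo (m₀ / 2) b, isOpen_Ioo.mem_nhds hxIoo,
          (hinvcont.mono Ioo_subset_Icc_self).aestronglyMeasurable measurableSet_Ioo⟩
      · exact hinvcont.continuousAt (Icc_mem_nhds hxIoo.1 hxIoo.2)
    have hFlip : LipschitzOnWith (δ⁻¹).toNNReal F (Icc m₀ (b / 2)) := by
      rw [lipschitzOnWith_iff_dist_le_mul]
      intro x hx y hy
      have hsub2 : Set.uIoc y x ⊆ Icc (m₀ / 2) b :=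
        (Set.Ioc_subset_Icc_self.trans ((uIcc_subset_Icc hy hx).trans hsub1) : Set.uIoc y x ⊆ _)
      have hFsub : F x - F y = ∫ r in y..x, (ψ t₂ r)⁻¹ :=
        intervalIntegral.integral_interval_sub_left (hFint _ hΦt₂mem _ hx) (hFint _ hΦt₂mem _ hy)
      have hbound : ∀ r ∈ Set.uIoc y x, ‖(ψ t₂ r)⁻¹‖ ≤ δ⁻¹ := by
        intro r hr
        have hrJ : r ∈ Icc (m₀ / 2) b := hsub2 hr
        rw [Real.norm_eq_abs, abs_of_pos (inv_pos.2 (lt_of_lt_of_le hδpos (hδle r hrJ)))]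
        exact inv_anti₀ hδpos (hδle r hrJ)
      have hnorm := intervalIntegral.norm_integral_le_of_norm_le_const hbound
      rw [Real.norm_eq_abs] at hnorm
      rw [Real.dist_eq, Real.dist_eq, hFsub]
      calc |∫ r in y..x, (ψ t₂ r)⁻¹| ≤ δ⁻¹ * |x - y| := hnorm
        _ = ((δ⁻¹).toNNReal : ℝ) * |x - y| := by
            rw [Real.coe_toNNReal _ (inv_nonneg.2 hδpos.le)]
    -- the composed function
    set cd : ℝ → ℝ := fun σ => max τ (min σ t₂) with hcddef
    have hcdlip : LipschitzWith 1 cd := auxLipschitzClamp τ t₂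
    have hcdmem : ∀ σ, cd σ ∈ Icc τ t₂ := auxClampMem hτ.2.le
    have hcdeq : ∀ σ ∈ Icc τ t₂, cd σ = σ := fun σ hσ => auxClampEq hσ
    set h : ℝ → ℝ := F ∘ (Φ ∘ cd) with hhdef
    have hΦcdlip : LipschitzWith ((K * 1) * 1) (Φ ∘ cd) := hΦlip.comp hcdlip
    have hhlip : LipschitzWith ((δ⁻¹).toNNReal * ((K * 1) * 1)) h := by
      rw [← lipschitzOnWith_univ]
      exact hFlip.comp (hΦcdlip.lipschitzOnWith (s := univ)) (fun σ _ => hrangeτ _ (hcdmem σ))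
    have hheq : ∀ σ ∈ Icc τ t₂, h σ = F (Φ σ) := fun σ hσ => by
      simp only [hhdef, Function.comp_apply, hcdeq σ hσ]
    have hpτ : IntegrableOn p (Icc τ t₂) := hploc τ t₂ hτ0 hτ.2.le ht₂a
    have hkey := auxLipschitzSubLeIntegral hhlip hτ.2 hpτ ?_
    · have he2 : h t₂ = F (Φ t₂) := hheq t₂ ⟨hτ.2.le, le_rfl⟩
      have he3 : h τ = F (Φ τ) := hheq τ ⟨le_rfl, hτ.2.le⟩
      have he4 : F (Φ t₂) = 0 := intervalIntegral.integral_same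
      have he5 : F (Φ τ) = - ∫ r in (Φ τ)..(Φ t₂), (ψ t₂ r)⁻¹ :=
        intervalIntegral.integral_symm _ _
      rw [he2, he3, he4, he5] at hkey
      linarith
    · filter_upwards [hΦder, hΦdiff] with σ hσ1 hσ2 hσmem y hy
      have hσ0a' : σ ∈ Ioo 0 a' :=
        ⟨hτ0.trans hσmem.1, lt_of_lt_of_le hσmem.2 ht₂a'⟩
      have hyΦ : HasDerivAt Φ (deriv Φ σ) σ := hσ2.hasDerivAt
      have hgb : deriv Φ σ ≤ g σ (Φ σ) := hσ1 hσ0a' _ hyΦ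
      have hΦσmem : Φ σ ∈ Icc m₀ (b / 2) := hrangeτ σ ⟨hσmem.1.le, hσmem.2.le⟩
      have hev : (F ∘ Φ) =ᶠ[nhds σ] h := by
        refine eventually_of_mem (isOpen_Ioo.mem_nhds hσmem) (fun x hx => ?_)
        simp only [Function.comp_apply]
        rw [hheq x ⟨hx.1.le, hx.2.le⟩]
      have hFΦ : HasDerivAt (F ∘ Φ) ((ψ t₂ (Φ σ))⁻¹ * deriv Φ σ) σ :=
        (hF' (Φ σ) hΦσmem).comp σ hyΦ
      have hh' : HasDerivAt h ((ψ t₂ (Φ σ))⁻¹ * deriv Φ σ) σ := by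
        exact hFΦ.congr_of_eventuallyEq hev.symm
      have hyeq : y = (ψ t₂ (Φ σ))⁻¹ * deriv Φ σ := hy.unique hh'
      have hσIoca : σ ∈ Ioc (0:ℝ) a := ⟨hσ0a'.1, hσ0a'.2.le.trans ha'a⟩
      have hΦb : Φ σ ∈ Icc (0:ℝ) b := hΦrange σ
      have h1 : g σ (Φ σ) ≤ p σ * ψ σ (Φ σ) := hgle σ hσIoca (Φ σ) hΦb
      have h2 : ψ σ (Φ σ) ≤ ψ t₂ (Φ σ) :=
        hii' (Φ σ) ⟨hΦb.1, by linarith [hΦb.2]⟩ σ hσIoca t₂ ht₂Ioca hσmem.2.le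
      have hψp : 0 < ψ t₂ (Φ σ) :=
        hψpos (Φ σ) ⟨hpos σ ⟨hτ.1.trans hσmem.1, hσmem.2.le⟩, hΦb.2⟩
      have hp0 : 0 < p σ := hp σ hσIoca
      have h3 : deriv Φ σ ≤ p σ * ψ t₂ (Φ σ) := by nlinarith
      rw [hyeq]
      calc (ψ t₂ (Φ σ))⁻¹ * deriv Φ σ ≤ (ψ t₂ (Φ σ))⁻¹ * (p σ * ψ t₂ (Φ σ)) :=
            mul_le_mul_of_nonneg_left h3 (inv_nonneg.2 hψp.le)
        _ = p σ := by field_simp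
  -- now the case analysis
  rcases ht₁0.eq_or_lt with h0 | ht₁pos
  · -- Case t₁ = 0 : use (iii') with u = Φ
    subst h0
    have hmaps : ∀ σ ∈ Ioc (0:ℝ) t₂, Φ σ ∈ Ioo 0 b := fun σ hσ =>
      ⟨hpos σ hσ, lt_of_le_of_lt (hΦle σ ⟨hσ.1.le, hσ.2⟩) (by linarith)⟩
    have htendD : Tendsto (fun σ => Φ σ / (σ - 0)) (nhdsWithin 0 (Ioi 0)) (nhds 0) := by
      simpa [sub_zero] using hΦslope
    have hls := hiii' 0 t₂ le_rfl ht₁t₂ ht₂a Φ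
      ⟨K * 1, hΦlip.lipschitzOnWith (s := Ioc 0 t₂)⟩ hmaps htendD
    have hev : ∀ᶠ σ in nhdsWithin (0:ℝ) (Ioi 0),
        (((∫ r in Φ σ..Φ t₂, 1 / ψ t₂ r) - ∫ s in σ..t₂, p s : ℝ) : EReal) ≤ (0:EReal) := by
      filter_upwards [Ioo_mem_nhdsGT ht₁t₂] with σ hσ
      have hCσ := hC σ hσ
      rw [EReal.coe_nonpos]
      simp only [one_div]
      linarith
    have hle := Filter.limsup_le_of_le (h := hev)
    exact absurd (lt_of_lt_of_le hls hle) (lt_irrefl _)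
  · -- Case t₁ > 0
    by_cases hInt : IntegrableOn (fun r => (ψ t₂ r)⁻¹) (Ioc 0 (Φ t₂)) volume
    · -- E1: the Osgood integral converges
      set f : ℝ → ℝ := fun r => (ψ t₂ r)⁻¹ with hfdef
      set t₃ := (t₁ + t₂) / 2 with ht₃def
      have ht₃1 : t₁ < t₃ := by simp only [ht₃def]; linarith
      have ht₃2 : t₃ < t₂ := by simp only [ht₃def]; linarith
      have ht₃pos : 0 < t₃ := ht₁pos.trans ht₃1
      set P₀ := ∫ σ in t₃..t₂, p σ with hP₀def
      have hpint32 : IntervalIntegrable p volume t₃ t₂ := by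
        rw [intervalIntegrable_iff_integrableOn_Icc_of_le ht₃2.le]
        exact hploc t₃ t₂ ht₃pos ht₃2.le ht₂a
      have hP₀pos : 0 < P₀ :=
        intervalIntegral.intervalIntegral_pos_of_pos_on hpint32
          (fun σ hσ => hp σ ⟨ht₃pos.trans hσ.1, hσ.2.le.trans ht₂a⟩) ht₃2
      set I : ℕ → ℝ := fun n => ∫ r in Ioc 0 (Φ t₂ / (n+1)), f r with hIdef
      have hεle : ∀ n : ℕ, Φ t₂ / (n+1) ≤ Φ t₂ := fun n =>
        div_le_self hΦt₂pos.le (le_add_of_nonneg_left n.cast_nonneg)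
      have hIP : ∀ n : ℕ, P₀ < I n := by
        intro n
        set ε := Φ t₂ / (n+1) with hεdef
        have hε0 : 0 < ε := by positivity
        have hεΦ : ε ≤ Φ t₂ := hεle n
        have hεb : ε < b := by linarith [hΦt₂b]
        have hd21 : 0 < t₂ - t₁ := by linarith
        set u : ℝ → ℝ := fun σ => ε * (σ - t₁)^2 / (t₂ - t₁)^2 with hudef
        have hut₂ : u t₂ = ε := by
          simp only [hudef]; field_simp
        have hulip : LipschitzOnWith (Real.toNNReal (2 * ε / (t₂ - t₁))) u (Ioc t₁ t₂) := by
          rw [lipschitzOnWith_iff_dist_le_mul]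
          intro x hx y hy
          rw [Real.dist_eq, Real.dist_eq]
          have e1 : u x - u y = ε / (t₂ - t₁)^2 * ((x + y - 2*t₁) * (x - y)) := by
            simp only [hudef]; field_simp; ring
          rw [e1, Real.coe_toNNReal _ (by positivity)]
          rw [abs_mul, abs_of_pos (by positivity : (0:ℝ) < ε / (t₂ - t₁)^2), abs_mul]
          have hb1 : |x + y - 2*t₁| ≤ 2 * (t₂ - t₁) := by
            rw [abs_le]; constructor <;> nlinarith [hx.1, hx.2, hy.1, hy.2]
          calc ε / (t₂ - t₁)^2 * (|x + y - 2*t₁| * |x - y|)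
              ≤ ε / (t₂ - t₁)^2 * (2 * (t₂ - t₁) * |x - y|) := by
                refine mul_le_mul_of_nonneg_left ?_ (by positivity)
                exact mul_le_mul_of_nonneg_right hb1 (abs_nonneg _)
            _ = 2 * ε / (t₂ - t₁) * |x - y| := by field_simp
        have husq : ∀ σ, t₁ < σ → σ ≤ t₂ → u σ ≤ ε := by
          intro σ h1 h2
          have hsq : (σ - t₁)^2 ≤ (t₂ - t₁)^2 := by nlinarith
          simp only [hudef]
          rw [div_le_iff₀ (by positivity)]
          nlinarith
        have humaps : ∀ σ ∈ Ioc t₁ t₂, u σ ∈ Ioo (0:ℝ) b := by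
          intro σ hσ
          refine ⟨?_, lt_of_le_of_lt (husq σ hσ.1 hσ.2) hεb⟩
          simp only [hudef]
          have h1 : 0 < σ - t₁ := by linarith [hσ.1]
          positivity
        have hutend : Tendsto (fun σ => u σ / (σ - t₁)) (nhdsWithin t₁ (Ioi t₁)) (nhds 0) := by
          have h2 : Continuous (fun σ : ℝ => ε * (σ - t₁) / (t₂ - t₁)^2) := by fun_prop
          have h1 : Tendsto (fun σ : ℝ => ε * (σ - t₁) / (t₂ - t₁)^2)
              (nhdsWithin t₁ (Ioi t₁)) (nhds 0) := by
            have h3 := (h2.tendsto t₁).mono_left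
              (nhdsWithin_le_nhds (s := Ioi t₁))
            simpa using h3
          refine h1.congr' ?_
          filter_upwards [self_mem_nhdsWithin] with σ hσ
          have hne : σ - t₁ ≠ 0 := sub_ne_zero.2 (ne_of_gt hσ)
          simp only [hudef]
          field_simp
        have hls := hiii' t₁ t₂ ht₁0 ht₁t₂ ht₂a u ⟨_, hulip⟩ humaps hutend
        have hev : ∀ᶠ σ in nhdsWithin t₁ (Ioi t₁),
            (((∫ r in u σ..u t₂, 1 / ψ t₂ r) - ∫ s in σ..t₂, p s : ℝ) : EReal)
              ≤ ((I n - P₀ : ℝ) : EReal) := by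
          filter_upwards [Ioo_mem_nhdsGT ht₃1] with σ hσ
          rw [EReal.coe_le_coe_iff]
          have huσpos : 0 < u σ := (humaps σ ⟨hσ.1, (hσ.2.trans ht₃2).le⟩).1
          have huσε : u σ ≤ ε := husq σ hσ.1 (hσ.2.trans ht₃2).le
          have e1 : (∫ r in u σ..u t₂, 1 / ψ t₂ r) ≤ I n := by
            rw [hut₂, intervalIntegral.integral_of_le huσε]
            simp only [one_div]
            refine setIntegral_mono_set (hInt.mono_set (Ioc_subset_Ioc_right hεΦ)) ?_ ?_
            · filter_upwards [ae_restrict_mem measurableSet_Ioc] with r hr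
              exact (inv_pos.2 (hψpos r ⟨hr.1, hr.2.trans hεb.le⟩)).le
            · exact HasSubset.Subset.eventuallyLE (Ioc_subset_Ioc_left huσpos.le)
          have e2 : P₀ ≤ ∫ s in σ..t₂, p s := by
            have hi1 : IntervalIntegrable p volume σ t₃ := by
              rw [intervalIntegrable_iff_integrableOn_Icc_of_le hσ.2.le]
              exact hploc σ t₃ (ht₁pos.trans hσ.1) hσ.2.le (ht₃2.le.trans ht₂a)
            have hadj := intervalIntegral.integral_add_adjacent_intervals hi1 hpint32
            have hnn : 0 ≤ ∫ s in σ..t₃, p s := intervalIntegral.integral_nonneg hσ.2.le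
              (fun x hx => (hp x ⟨(ht₁pos.trans hσ.1).trans_le hx.1,
                hx.2.trans (ht₃2.le.trans ht₂a)⟩).le)
            linarith [hadj]
          linarith
        have hle := Filter.limsup_le_of_le (h := hev)
        have hlt := lt_of_lt_of_le hls hle
        have := EReal.coe_pos.1 (by exact_mod_cast hlt)
        linarith
      have hI0 : Tendsto I atTop (nhds 0) := by
        have hεtend : Tendsto (fun n : ℕ => Φ t₂ / (n+1)) atTop (nhds 0) := by
          have h1 : Tendsto (fun n : ℕ => Φ t₂ * (1 / (n + 1))) atTop (nhds (Φ t₂ * 0)) :=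
            tendsto_one_div_add_atTop_nhds_zero_nat.const_mul (Φ t₂)
          simpa [div_eq_mul_inv] using h1
        set μ := volume.restrict (Ioc (0:ℝ) (Φ t₂)) with hμdef
        have key : Tendsto (fun n : ℕ => ∫ r, (Ioc (0:ℝ) (Φ t₂ / (n+1))).indicator f r ∂μ)
            atTop (nhds (∫ r, (0:ℝ) ∂μ)) := by
          refine tendsto_integral_of_dominated_convergence (fun r => |f r|)
            (fun n => (hInt.aestronglyMeasurable).indicator measurableSet_Ioc)
            hInt.abs (fun n => ?_) ?_
          · refine ae_of_all _ fun r => ?_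
            have h1 := norm_indicator_le_norm_self (s := Ioc (0:ℝ) (Φ t₂ / (n+1))) f r
            simpa [Real.norm_eq_abs] using h1
          · filter_upwards [ae_restrict_mem measurableSet_Ioc] with r hr
            have hev2 : ∀ᶠ n : ℕ in atTop, (Ioc (0:ℝ) (Φ t₂ / (n+1))).indicator f r = 0 := by
              filter_upwards [hεtend.eventually_lt_const hr.1] with n hn
              exact indicator_of_notMem (fun hmem => absurd hmem.2 (not_le.2 hn)) f
            exact tendsto_const_nhds.congr' (hev2.mono fun n hn => hn.symm)
        have hIeq : ∀ n : ℕ, (∫ r, (Ioc (0:ℝ) (Φ t₂ / (n+1))).indicator f r ∂μ) = I n := by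
          intro n
          rw [MeasureTheory.integral_indicator measurableSet_Ioc]
          rw [hμdef, Measure.restrict_restrict measurableSet_Ioc]
          rw [inter_eq_self_of_subset_left (Ioc_subset_Ioc_right (hεle n))]
        simp only [MeasureTheory.integral_zero] at key
        exact Filter.Tendsto.congr hIeq key
      obtain ⟨n, hn⟩ := (hI0.eventually_lt_const hP₀pos).exists
      exact absurd (hIP n) (not_lt.2 hn.le)
    · -- E2: the Osgood integral diverges
      set P := ∫ σ in t₁..t₂, p σ with hPdef
      have hPnn : 0 ≤ P := intervalIntegral.integral_nonneg ht₁t₂.le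
        (fun σ hσ => (hp σ ⟨lt_of_lt_of_le ht₁pos hσ.1, hσ.2.trans ht₂a⟩).le)
      have hex : ∃ δ₀, 0 < δ₀ ∧ δ₀ < Φ t₂ ∧ P < ∫ r in δ₀..(Φ t₂), (ψ t₂ r)⁻¹ := by
        by_contra hno
        push_neg at hno
        refine hInt (auxIntegrableOfBounded hΦt₂pos
          (hinvcontIoc.mono (fun r hr => ⟨hr.1, hr.2.trans (by linarith)⟩)) ?_ (M := P) ?_)
        · intro r hr
          exact (inv_pos.2 (hψpos r ⟨hr.1, hr.2.trans (by linarith)⟩)).le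
        · intro n
          have hdle : Φ t₂ / (n+1) ≤ Φ t₂ :=
            div_le_self hΦt₂pos.le (le_add_of_nonneg_left n.cast_nonneg)
          rcases hdle.lt_or_eq with hlt | he
          · rw [← intervalIntegral.integral_of_le hdle]
            exact hno _ (by positivity) hlt
          · rw [he, Set.Ioc_self]
            simpa using hPnn
      obtain ⟨δ₀, hδ₀pos, hδ₀lt, hδ₀big⟩ := hex
      have htend0 : Tendsto Φ (nhdsWithin t₁ (Ioi t₁)) (nhds 0) := by
        have h1 := (hΦcont.continuousAt (x := t₁)).tendsto.mono_left
          (nhdsWithin_le_nhds (s := Ioi t₁))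
        rwa [hΦt₁] at h1
      obtain ⟨τ, hτsm, hτmem⟩ := ((htend0.eventually_lt_const hδ₀pos).and
        (Ioo_mem_nhdsGT ht₁t₂)).exists
      have hCτ := hC τ hτmem
      have hΦτpos : 0 < Φ τ := hpos τ ⟨hτmem.1, hτmem.2.le⟩
      have hΦτb : Φ τ ≤ δ₀ := hτsm.le
      have hδ₀b : δ₀ ≤ b := by linarith [hΦt₂b]
      have hsplit : (∫ r in (Φ τ)..(Φ t₂), (ψ t₂ r)⁻¹)
          = (∫ r in (Φ τ)..δ₀, (ψ t₂ r)⁻¹) + ∫ r in δ₀..(Φ t₂), (ψ t₂ r)⁻¹ :=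
        (intervalIntegral.integral_add_adjacent_intervals
          (hIIinv hΦτpos hΦτb hδ₀b) (hIIinv hδ₀pos hδ₀lt.le (by linarith [hΦt₂b]))).symm
      have hnn1 : 0 ≤ ∫ r in (Φ τ)..δ₀, (ψ t₂ r)⁻¹ :=
        intervalIntegral.integral_nonneg hΦτb (fun r hr =>
          (inv_pos.2 (hψpos r ⟨lt_of_lt_of_le hΦτpos hr.1, hr.2.trans hδ₀b⟩)).le)
      have hPge : (∫ σ in τ..t₂, p σ) ≤ P := by
        have hi1 : IntervalIntegrable p volume t₁ τ := by
          rw [intervalIntegrable_iff_integrableOn_Icc_of_le hτmem.1.le]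
          exact hploc t₁ τ ht₁pos hτmem.1.le (hτmem.2.le.trans ht₂a)
        have hi2 : IntervalIntegrable p volume τ t₂ := by
          rw [intervalIntegrable_iff_integrableOn_Icc_of_le hτmem.2.le]
          exact hploc τ t₂ (ht₁pos.trans hτmem.1) hτmem.2.le ht₂a
        have hadj := intervalIntegral.integral_add_adjacent_intervals hi1 hi2
        have hnn2 : 0 ≤ ∫ σ in t₁..τ, p σ := intervalIntegral.integral_nonneg hτmem.1.le
          (fun σ hσ => (hp σ ⟨lt_of_lt_of_le ht₁pos hσ.1,
            hσ.2.trans (hτmem.2.le.trans ht₂a)⟩).le)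
        linarith [hadj]
      linarith
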